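/- arXiv:1310.0133 — 2 statements merged into one kernel-verified Lean document; each statement's English description precedes it below -/
import Mathlib

section
/- In the static case V = 0 with the blade element model (γ = 0, α = β, C_L = C_{L_α}(β − α₀), C_D = C_{D₀} + k C_{L_α}²(β − α₀)², nonnegative integrable chord c, ρ > 0, m ≥ 1, d > 0), fix a commanded thrust T_c > 0. For β > α₀, write the required power as P(β) = 2π M(β) (T_c / K(β))^{3/2}, where K(β) = A·(β − α₀) with A = 0.5 m ρ d² C_{L_α} ∫₀^{d/2} (2πr/d)² c(r) dr > 0 and M(β) = B + C·(β − α₀)² with B = 0.5 m ρ d² C_{D₀} ∫₀^{d/2} (2πr/d)² r c(r) dr > 0 and C = 0.5 m ρ d² k C_{L_α}² ∫₀^{d/2} (2πr/d)² r c(r) dr > 0. Then P(β) → ∞ as β → α₀⁺ and as β → ∞, and P attains a global minimum on (α₀, ∞) at the unique β* > α₀ satisfying (β* − α₀)² = 3B/C. -/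
set_option maxHeartbeats 800000

open Real MeasureTheory Filter Topology

/-- Static case `V = 0`: fix a commanded thrust `T_c > 0`. For `β > α₀` the required
power is `P(β) = 2π M(β) (T_c / K(β))^{3/2}` with `K(β) = A(β − α₀)` and
`M(β) = B + C(β − α₀)²`, where the positive constants `A`, `B`, `C` are given by the
blade-element integrals. Then `P(β) → ∞` as `β → α₀⁺` and as `β → ∞`, and `P` attains
a global minimum on `(α₀, ∞)` at the unique `β* > α₀` with `(β* − α₀)² = 3B/C`. -/
theorem required_power_has_unique_optimal_pitch
    (m : ℕ) (hm : 1 ≤ m)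
    (ρ d CLα CD0 k α₀ T_c : ℝ)
    (hρ : 0 < ρ) (hd : 0 < d) (hCLα : 0 < CLα) (hTc : 0 < T_c)
    (c : ℝ → ℝ)
    (hc_int : IntervalIntegrable c volume 0 (d / 2))
    (hc_nonneg : ∀ r ∈ Set.Icc 0 (d / 2), 0 ≤ c r)
    (A B C : ℝ)
    (hA : A = 0.5 * (m : ℝ) * ρ * d ^ 2 * CLα *
      ∫ r in (0:ℝ)..(d / 2), (2 * π * r / d) ^ 2 * c r)
    (hApos : 0 < A)
    (hB : B = 0.5 * (m : ℝ) * ρ * d ^ 2 * CD0 *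
      ∫ r in (0:ℝ)..(d / 2), (2 * π * r / d) ^ 2 * r * c r)
    (hBpos : 0 < B)
    (hC : C = 0.5 * (m : ℝ) * ρ * d ^ 2 * k * CLα ^ 2 *
      ∫ r in (0:ℝ)..(d / 2), (2 * π * r / d) ^ 2 * r * c r)
    (hCpos : 0 < C)
    (K M P : ℝ → ℝ)
    (hK : ∀ β, K β = A * (β - α₀))
    (hM : ∀ β, M β = B + C * (β - α₀) ^ 2)
    (hP : ∀ β, α₀ < β → P β = 2 * π * M β * (T_c / K β) ^ ((3:ℝ) / 2)) :
    Tendsto P (𝓝[>] α₀) atTop ∧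
    Tendsto P atTop atTop ∧
    ∃! βstar : ℝ, α₀ < βstar ∧ (βstar - α₀) ^ 2 = 3 * B / C ∧
      ∀ β, α₀ < β → P βstar ≤ P β := by
  have hπ : (0:ℝ) < π := Real.pi_pos
  set t : ℝ := T_c / A with ht_def
  have htpos : 0 < t := div_pos hTc hApos
  have htr : 0 < t ^ ((3:ℝ)/2) := Real.rpow_pos_of_pos htpos _
  -- rpow decomposition
  have hcube : ∀ x : ℝ, 0 < x → x ^ ((3:ℝ)/2) = Real.sqrt x ^ 3 := by
    intro x hx
    rw [show ((3:ℝ)/2) = (1/2) * ((3:ℕ):ℝ) by norm_num,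
      Real.rpow_mul hx.le, Real.rpow_natCast, ← Real.sqrt_eq_rpow]
  have hPx : ∀ β, α₀ < β → P β =
      2 * π * (B + C * (β - α₀) ^ 2) * (t ^ ((3:ℝ)/2) / Real.sqrt (β - α₀) ^ 3) := by
    intro β hβ
    have hx : 0 < β - α₀ := sub_pos.mpr hβ
    rw [hP β hβ, hM]
    congr 1
    have h1 : T_c / K β = t / (β - α₀) := by
      rw [hK, ht_def]; field_simp
    rw [h1, Real.div_rpow htpos.le hx.le, hcube _ hx]
  -- Part 1
  have hxmap : Tendsto (fun β => β - α₀) (𝓝[>] α₀) (𝓝[>] 0) := by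
    apply tendsto_nhdsWithin_of_tendsto_nhds_of_eventually_within
    · have h0 : Tendsto (fun β : ℝ => β - α₀) (𝓝 α₀) (𝓝 (α₀ - α₀)) :=
        (continuous_sub_right α₀).tendsto α₀
      rw [sub_self] at h0
      exact h0.mono_left nhdsWithin_le_nhds
    · filter_upwards [self_mem_nhdsWithin] with β hβ
      exact Set.mem_Ioi.mpr (sub_pos.mpr (Set.mem_Ioi.mp hβ))
  have hpart1 : Tendsto P (𝓝[>] α₀) atTop := by
    have hdiv : Tendsto (fun β => t / (β - α₀)) (𝓝[>] α₀) atTop := by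
      have h1 : Tendsto (fun β => (β - α₀)⁻¹) (𝓝[>] α₀) atTop :=
        tendsto_inv_nhdsGT_zero.comp hxmap
      have := h1.const_mul_atTop htpos
      simpa [div_eq_mul_inv] using this
    have h2 : Tendsto (fun β => (t / (β - α₀)) ^ ((3:ℝ)/2)) (𝓝[>] α₀) atTop :=
      (tendsto_rpow_atTop (by norm_num : (0:ℝ) < 3/2)).comp hdiv
    have h3 : Tendsto (fun β => 2 * π * B * ((t / (β - α₀)) ^ ((3:ℝ)/2))) (𝓝[>] α₀) atTop :=
      h2.const_mul_atTop (by positivity)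
    apply tendsto_atTop_mono' _ _ h3
    filter_upwards [self_mem_nhdsWithin] with β hβ
    have hx : 0 < β - α₀ := sub_pos.mpr hβ
    rw [hPx β hβ]
    have e1 : (t / (β - α₀)) ^ ((3:ℝ)/2) = t ^ ((3:ℝ)/2) / Real.sqrt (β - α₀) ^ 3 := by
      rw [Real.div_rpow htpos.le hx.le, hcube _ hx]
    rw [e1]
    have hpos : 0 ≤ t ^ ((3:ℝ)/2) / Real.sqrt (β - α₀) ^ 3 := by positivity
    nlinarith [mul_nonneg (mul_nonneg (by positivity : (0:ℝ) ≤ 2 * π) (by positivity : (0:ℝ) ≤ C * (β - α₀)^2)) hpos]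
  -- Part 2
  have hpart2 : Tendsto P atTop atTop := by
    have hsq : Tendsto (fun β : ℝ => Real.sqrt (β - α₀)) atTop atTop := by
      have h0 : Tendsto (fun x : ℝ => x ^ ((1:ℝ)/2)) atTop atTop :=
        tendsto_rpow_atTop (by norm_num)
      have h1 : Tendsto (fun β : ℝ => β - α₀) atTop atTop := by
        simpa [sub_eq_add_neg] using tendsto_atTop_add_const_right atTop (-α₀) (tendsto_id (α := ℝ))
      have := h0.comp h1
      refine this.congr' ?_
      filter_upwards [eventually_ge_atTop α₀] with β hβ
      simp [Function.comp, Real.sqrt_eq_rpow]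
    have hlow : Tendsto (fun β => 2 * π * C * t ^ ((3:ℝ)/2) * Real.sqrt (β - α₀)) atTop atTop :=
      hsq.const_mul_atTop (by positivity)
    apply tendsto_atTop_mono' _ _ hlow
    filter_upwards [eventually_gt_atTop α₀] with β hβ
    have hx : 0 < β - α₀ := sub_pos.mpr hβ
    have hs : 0 < Real.sqrt (β - α₀) := Real.sqrt_pos.mpr hx
    rw [hPx β hβ]
    set s := Real.sqrt (β - α₀)
    have hx2 : (β - α₀) ^ 2 = s ^ 4 := by
      have : s ^ 2 = β - α₀ := Real.sq_sqrt hx.le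
      nlinarith [this]
    rw [hx2, div_eq_mul_inv]
    have hinv : (s ^ 3)⁻¹ * s ^ 3 = 1 := inv_mul_cancel₀ (by positivity)
    have key : 2 * π * C * t ^ ((3:ℝ)/2) * s * s ^ 3 ≤ 2 * π * (B + C * s ^ 4) * (t ^ ((3:ℝ)/2) * (s ^ 3)⁻¹) * s ^ 3 := by
      have : 2 * π * (B + C * s ^ 4) * (t ^ ((3:ℝ)/2) * (s ^ 3)⁻¹) * s ^ 3
          = 2 * π * (B + C * s ^ 4) * t ^ ((3:ℝ)/2) := by
        field_simp
      rw [this]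
      nlinarith [mul_pos (mul_pos (by positivity : (0:ℝ) < 2 * π) hBpos) htr]
    exact le_of_mul_le_mul_right key (by positivity)
  refine ⟨hpart1, hpart2, ?_⟩
  -- Part 3
  set xs : ℝ := Real.sqrt (3 * B / C) with hxs_def
  have hxs_pos : 0 < xs := Real.sqrt_pos.mpr (by positivity)
  have hxs_sq : xs ^ 2 = 3 * B / C := Real.sq_sqrt (by positivity)
  refine ⟨α₀ + xs, ⟨by linarith, by simp [hxs_sq], ?_⟩, ?_⟩
  · -- minimality
    intro β hβ
    have hx : 0 < β - α₀ := sub_pos.mpr hβ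
    have hβs : α₀ < α₀ + xs := by linarith
    rw [hPx _ hβs, hPx _ hβ]
    set u := Real.sqrt xs with hu_def
    set v := Real.sqrt (β - α₀) with hv_def
    have hu : 0 < u := Real.sqrt_pos.mpr hxs_pos
    have hv : 0 < v := Real.sqrt_pos.mpr hx
    have hu2 : u ^ 2 = xs := Real.sq_sqrt hxs_pos.le
    have hv2 : v ^ 2 = β - α₀ := Real.sq_sqrt hx.le
    have hu4 : u ^ 4 = xs ^ 2 := by rw [← hu2]; ring
    have hBu : 3 * B = C * u ^ 4 := by
      rw [hu4, hxs_sq]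
      field_simp
    have hs1 : α₀ + xs - α₀ = xs := by ring
    rw [hs1]
    have e1 : xs ^ 2 = u ^ 4 := hu4.symm
    have e2 : (β - α₀) ^ 2 = v ^ 4 := by rw [← hv2]; ring
    rw [e1, e2]
    -- reduce to (B + C u^4) v^3 ≤ (B + C v^4) u^3
    have key : (B + C * u ^ 4) * v ^ 3 ≤ (B + C * v ^ 4) * u ^ 3 := by
      have hfac : 0 ≤ (u - v) ^ 2 * (u ^ 2 + 2 * u * v + 3 * v ^ 2) := by positivity
      -- 4*u*v^3 ≤ u^4 + 3*v^4
      have h4 : 4 * u * v ^ 3 ≤ u ^ 4 + 3 * v ^ 4 := by nlinarith [hfac]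
      -- multiply by C*u^3/3 > 0 ... use B = C u^4/3
      have hB' : B = C * u ^ 4 / 3 := by linarith
      rw [hB']
      have := mul_le_mul_of_nonneg_left h4 (by positivity : (0:ℝ) ≤ C * u ^ 3 / 3)
      nlinarith [this]
    have hd1 : 0 < u ^ 3 := by positivity
    have hd2 : 0 < v ^ 3 := by positivity
    have key2 : (B + C * u ^ 4) / u ^ 3 ≤ (B + C * v ^ 4) / v ^ 3 :=
      (div_le_div_iff₀ hd1 hd2).mpr key
    calc 2 * π * (B + C * u ^ 4) * (t ^ ((3:ℝ)/2) / u ^ 3)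
        = (2 * π * t ^ ((3:ℝ)/2)) * ((B + C * u ^ 4) / u ^ 3) := by ring
      _ ≤ (2 * π * t ^ ((3:ℝ)/2)) * ((B + C * v ^ 4) / v ^ 3) := by
          apply mul_le_mul_of_nonneg_left key2 (by positivity)
      _ = 2 * π * (B + C * v ^ 4) * (t ^ ((3:ℝ)/2) / v ^ 3) := by ring
  · -- uniqueness
    rintro β' ⟨hβ'1, hβ'2, -⟩
    have hx' : 0 < β' - α₀ := sub_pos.mpr hβ'1
    have : β' - α₀ = xs := by
      rw [hxs_def, ← hβ'2, Real.sqrt_sq hx'.le]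
    linarith
end

section
/- Let P : ℝ → ℝ be defined for β > α₀ by P(β) = 2π(B + C(β − α₀)²)·(T_c/(A(β − α₀)))^{3/2} with constants A, B, C, T_c > 0. Then P is strictly convex on the interval (α₀, α₀ + √(3B/C)] and strictly increasing on [α₀ + √(3B/C), ∞); consequently every stationary point of P on (α₀, ∞) is the global minimizer β* = α₀ + √(3B/C), so a descent scheme on β that decreases β when P increases and increases β when P decreases cannot converge to any point other than β*. -/
open Real

/-- Let `P(β) = 2π(B + C(β − α₀)²)(T_c/(A(β − α₀)))^{3/2}` for `β > α₀`, with
constants `A, B, C, T_c > 0`. Then `P` is strictly convex on `(α₀, α₀ + √(3B/C)]`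
and strictly increasing on `[α₀ + √(3B/C), ∞)`; consequently every stationary point
of `P` on `(α₀, ∞)` is the global minimizer `β* = α₀ + √(3B/C)`. -/
theorem required_power_convexity_and_stationary_points
    (A B C T_c α₀ : ℝ)
    (hA : 0 < A) (hB : 0 < B) (hC : 0 < C) (hTc : 0 < T_c)
    (P : ℝ → ℝ)
    (hP : ∀ β, α₀ < β →
      P β = 2 * π * (B + C * (β - α₀) ^ 2) *
        (T_c / (A * (β - α₀))) ^ ((3:ℝ) / 2)) :
    StrictConvexOn ℝ (Set.Ioc α₀ (α₀ + Real.sqrt (3 * B / C))) P ∧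
    StrictMonoOn P (Set.Ici (α₀ + Real.sqrt (3 * B / C))) ∧
    ∀ β, α₀ < β → HasDerivAt P 0 β → β = α₀ + Real.sqrt (3 * B / C) := by
  have hπ : (0:ℝ) < π := Real.pi_pos
  set s := Real.sqrt (3 * B / C) with hs_def
  have hsq : s ^ 2 = 3 * B / C := Real.sq_sqrt (by positivity)
  have hs : 0 < s := Real.sqrt_pos.mpr (by positivity)
  set K := 2 * π * (T_c / A) ^ ((3:ℝ)/2) with hK_def
  have hK : 0 < K := by positivity
  -- `P` agrees with a nicer formula on `Ioi α₀`
  have hPf : ∀ β, α₀ < β →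
      P β = K * (B * (β - α₀) ^ (-3/2:ℝ) + C * (β - α₀) ^ (1/2:ℝ)) := by
    intro β hβ
    have hx : 0 < β - α₀ := sub_pos.mpr hβ
    have h3 : (T_c / (A * (β - α₀))) ^ ((3:ℝ)/2)
        = (T_c / A) ^ ((3:ℝ)/2) * (β - α₀) ^ (-3/2:ℝ) := by
      rw [show T_c / (A * (β - α₀)) = (T_c / A) / (β - α₀) from (div_div T_c A (β - α₀)).symm,
        Real.div_rpow (by positivity) hx.le,
        show (-3/2:ℝ) = -((3:ℝ)/2) from by norm_num,
        Real.rpow_neg hx.le, div_eq_mul_inv]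
    have h4 : (β - α₀) ^ (1/2:ℝ) = (β - α₀) ^ (-3/2:ℝ) * (β - α₀) ^ 2 := by
      rw [← Real.rpow_natCast (β - α₀) 2, ← Real.rpow_add hx]; norm_num
    rw [hP β hβ, h3, h4, hK_def]; ring
  -- First derivative of the nice formula
  have hD1 : ∀ β, α₀ < β →
      HasDerivAt (fun b => K * (B * (b - α₀) ^ (-3/2:ℝ) + C * (b - α₀) ^ (1/2:ℝ)))
        (K/2 * ((β - α₀) ^ (-5/2:ℝ) * (C * (β - α₀) ^ 2 - 3 * B))) β := by
    intro β hβ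
    have hx : 0 < β - α₀ := sub_pos.mpr hβ
    have h1 := ((hasDerivAt_id β).sub_const α₀).rpow_const (p := (-3/2:ℝ)) (Or.inl hx.ne')
    have h2 := ((hasDerivAt_id β).sub_const α₀).rpow_const (p := (1/2:ℝ)) (Or.inl hx.ne')
    simp only [id_eq] at h1 h2
    have h := ((h1.const_mul B).add (h2.const_mul C)).const_mul K
    refine h.congr_deriv ?_
    rw [show ((-3/2:ℝ) - 1) = (-5/2:ℝ) from by norm_num,
      show ((1/2:ℝ) - 1) = (-1/2:ℝ) from by norm_num,
      show (β - α₀) ^ (-1/2:ℝ) = (β - α₀) ^ (-5/2:ℝ) * (β - α₀) ^ 2 from by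
        rw [← Real.rpow_natCast (β - α₀) 2, ← Real.rpow_add hx]; norm_num]
    ring
  -- `P` has the same derivative
  have hDP : ∀ β, α₀ < β →
      HasDerivAt P (K/2 * ((β - α₀) ^ (-5/2:ℝ) * (C * (β - α₀) ^ 2 - 3 * B))) β := by
    intro β hβ
    have hev : P =ᶠ[nhds β]
        (fun b => K * (B * (b - α₀) ^ (-3/2:ℝ) + C * (b - α₀) ^ (1/2:ℝ))) := by
      filter_upwards [Ioi_mem_nhds hβ] with b hb
      exact hPf b hb
    exact (hD1 β hβ).congr_of_eventuallyEq hev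
  -- Second derivative
  have hD2 : ∀ β, α₀ < β →
      HasDerivAt (fun b => K/2 * ((b - α₀) ^ (-5/2:ℝ) * (C * (b - α₀) ^ 2 - 3 * B)))
        (K/4 * ((β - α₀) ^ (-7/2:ℝ) * (15 * B - C * (β - α₀) ^ 2))) β := by
    intro β hβ
    have hx : 0 < β - α₀ := sub_pos.mpr hβ
    have h1 := ((hasDerivAt_id β).sub_const α₀).rpow_const (p := (-5/2:ℝ)) (Or.inl hx.ne')
    simp only [id_eq] at h1
    have h2 : HasDerivAt (fun b : ℝ => C * (b - α₀) ^ 2 - 3 * B)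
        (C * (2 * (β - α₀) ^ 1 * 1)) β :=
      ((((hasDerivAt_id β).sub_const α₀).pow 2).const_mul C).sub_const (3 * B)
    have h := (h1.mul h2).const_mul (K/2)
    refine h.congr_deriv ?_
    rw [show ((-5/2:ℝ) - 1) = (-7/2:ℝ) from by norm_num,
      show (β - α₀) ^ (-5/2:ℝ) = (β - α₀) ^ (-7/2:ℝ) * (β - α₀) from by
        rw [← Real.rpow_add_one hx.ne' (-7/2:ℝ)]; norm_num]
    ring
  have hDDP : ∀ β, α₀ < β →
      HasDerivAt (deriv P) (K/4 * ((β - α₀) ^ (-7/2:ℝ) * (15 * B - C * (β - α₀) ^ 2))) β := by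
    intro β hβ
    have hev : deriv P =ᶠ[nhds β]
        (fun b => K/2 * ((b - α₀) ^ (-5/2:ℝ) * (C * (b - α₀) ^ 2 - 3 * B))) := by
      filter_upwards [Ioi_mem_nhds hβ] with b hb
      exact (hDP b hb).deriv
    exact (hD2 β hβ).congr_of_eventuallyEq hev
  refine ⟨?_, ?_, ?_⟩
  · -- strict convexity on Ioc α₀ (α₀ + s)
    apply strictConvexOn_of_deriv2_pos (convex_Ioc _ _)
    · intro x hx
      exact ((hDP x hx.1).continuousAt).continuousWithinAt
    · intro x hx
      rw [interior_Ioc] at hx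
      obtain ⟨hx1, hx2⟩ := hx
      have hxx : 0 < x - α₀ := sub_pos.mpr hx1
      have hlt : (x - α₀) ^ 2 < s ^ 2 :=
        pow_lt_pow_left₀ (by linarith) hxx.le (by norm_num)
      rw [hsq] at hlt
      have hCx : C * (x - α₀) ^ 2 < 3 * B := by
        rw [lt_div_iff₀ hC] at hlt; linarith
      have : deriv^[2] P x = K/4 * ((x - α₀) ^ (-7/2:ℝ) * (15 * B - C * (x - α₀) ^ 2)) := by
        simp only [Function.iterate_succ, Function.iterate_zero, Function.comp_apply, id_eq]
        exact (hDDP x hx1).deriv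
      rw [this]
      have hrp : 0 < (x - α₀) ^ (-7/2:ℝ) := Real.rpow_pos_of_pos hxx _
      have : 0 < 15 * B - C * (x - α₀) ^ 2 := by linarith
      positivity
  · -- strict monotonicity on Ici (α₀ + s)
    apply strictMonoOn_of_deriv_pos (convex_Ici _)
    · intro x hx
      have hx1 : α₀ < x := by
        have := Set.mem_Ici.mp hx; linarith
      exact ((hDP x hx1).continuousAt).continuousWithinAt
    · intro x hx
      rw [interior_Ici] at hx
      have hx0 : α₀ < x := by
        have := Set.mem_Ioi.mp hx; linarith
      have hxx : 0 < x - α₀ := sub_pos.mpr hx0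
      have hgt : s ^ 2 < (x - α₀) ^ 2 :=
        pow_lt_pow_left₀ (by have := Set.mem_Ioi.mp hx; linarith) hs.le (by norm_num)
      rw [hsq] at hgt
      have hCx : 3 * B < C * (x - α₀) ^ 2 := by
        rw [div_lt_iff₀ hC] at hgt; linarith
      rw [(hDP x hx0).deriv]
      have hrp : 0 < (x - α₀) ^ (-5/2:ℝ) := Real.rpow_pos_of_pos hxx _
      have : 0 < C * (x - α₀) ^ 2 - 3 * B := by linarith
      positivity
  · -- stationary points
    intro β hβ hstat
    have hxx : 0 < β - α₀ := sub_pos.mpr hβ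
    have h0 : K/2 * ((β - α₀) ^ (-5/2:ℝ) * (C * (β - α₀) ^ 2 - 3 * B)) = 0 :=
      (hDP β hβ).unique hstat
    have hrp : 0 < (β - α₀) ^ (-5/2:ℝ) := Real.rpow_pos_of_pos hxx _
    have h1 : C * (β - α₀) ^ 2 - 3 * B = 0 := by
      rcases mul_eq_zero.mp h0 with h | h
      · exact absurd h (by positivity)
      rcases mul_eq_zero.mp h with h | h
      · exact absurd h hrp.ne'
      · exact h
    have h2 : (β - α₀) ^ 2 = s ^ 2 := by
      rw [hsq]; field_simp; linarith
    have h3 : (β - α₀ - s) * (β - α₀ + s) = 0 := by nlinarith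
    rcases mul_eq_zero.mp h3 with h | h
    · linarith
    · linarith
end
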